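/- Under the memoryless action-dependent source setup, H(X^n, Y^n) = Σ_{i=1}^n [ I(X_i ; A_i) + H(X_i, Y_i | A_i) ]. -/

import Mathlib

open Finset

/-- Probability that the random variable `X` takes the value `s`, under the pmf `p`. -/
noncomputable def probOf {Ω S : Type*} [Fintype Ω] [DecidableEq S]
    (p : Ω → ℝ) (X : Ω → S) (s : S) : ℝ :=
  ∑ ω : Ω, if X ω = s then p ω else 0

/-- Base-2 Shannon entropy of the random variable `X` under the pmf `p`. -/
noncomputable def ent {Ω S : Type*} [Fintype Ω] [Fintype S] [DecidableEq S]
    (p : Ω → ℝ) (X : Ω → S) : ℝ :=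
  ∑ s : S, Real.negMulLog (probOf p X s) / Real.log 2

/-- Conditional entropy `H(X | Y)` (base 2). -/
noncomputable def condEnt {Ω S T : Type*} [Fintype Ω] [Fintype S] [Fintype T]
    [DecidableEq S] [DecidableEq T] (p : Ω → ℝ) (X : Ω → S) (Y : Ω → T) : ℝ :=
  ent p (fun ω => (X ω, Y ω)) - ent p Y

/-- Mutual information `I(X ; Y)` (base 2). -/
noncomputable def mutInfo {Ω S T : Type*} [Fintype Ω] [Fintype S] [Fintype T]
    [DecidableEq S] [DecidableEq T] (p : Ω → ℝ) (X : Ω → S) (Y : Ω → T) : ℝ :=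
  ent p X + ent p Y - ent p (fun ω => (X ω, Y ω))

/-- Joint pmf of `(X^n, Y^n)` in the memoryless action-dependent source setup:
`X^n` i.i.d. `∼ μ`, `A^n = f X^n`, and conditionally on `X^n = x^n` the coordinates of `Y^n`
are independent with `Y_i ∼ W (x_i) (f x^n i)`. -/
noncomputable def jointPmf {n : ℕ} {𝒳 𝒜 𝒴 : Type*}
    (μ : 𝒳 → ℝ) (f : (Fin n → 𝒳) → (Fin n → 𝒜)) (W : 𝒳 → 𝒜 → 𝒴 → ℝ) :
    (Fin n → 𝒳) × (Fin n → 𝒴) → ℝ :=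
  fun ω => (∏ i, μ (ω.1 i)) * ∏ i, W (ω.1 i) (f ω.1 i) (ω.2 i)

set_option linter.unusedSectionVars false

lemma ent_eq {Ω S : Type*} [Fintype Ω] [Fintype S] [DecidableEq S]
    (p : Ω → ℝ) (X : Ω → S) :
    ent p X = (∑ ω, p ω * (-Real.log (probOf p X (X ω)))) / Real.log 2 := by
  rw [ent, ← Finset.sum_div]
  congr 1
  calc ∑ s : S, Real.negMulLog (probOf p X s)
      = ∑ s : S, ∑ ω : Ω, (if X ω = s then p ω else 0) * (-Real.log (probOf p X s)) := by
        refine Finset.sum_congr rfl fun s _ => ?_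
        rw [← Finset.sum_mul, ← probOf, Real.negMulLog]; ring
    _ = ∑ ω : Ω, ∑ s : S, (if X ω = s then p ω * (-Real.log (probOf p X s)) else 0) := by
        rw [Finset.sum_comm]
        refine Finset.sum_congr rfl fun ω _ => Finset.sum_congr rfl fun s _ => ?_
        split <;> simp
    _ = ∑ ω : Ω, p ω * (-Real.log (probOf p X (X ω))) := by
        refine Finset.sum_congr rfl fun ω _ => ?_
        simp [Finset.sum_ite_eq]

lemma sum_pi_fix {ι 𝒴 : Type*} [Fintype ι] [DecidableEq ι] [Fintype 𝒴] [DecidableEq 𝒴]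
    (c : ι → 𝒴 → ℝ) (i : ι) (y : 𝒴) :
    ∑ h : ι → 𝒴, (if h i = y then ∏ j, c j (h j) else 0)
      = c i y * ∏ j ∈ univ.erase i, (∑ z, c j z) := by
  have key : ∀ h : ι → 𝒴, (if h i = y then ∏ j, c j (h j) else 0)
      = ∏ j, (fun j z => if j = i then (if z = y then c i y else 0) else c j z) j (h j) := by
    intro h
    by_cases hy : h i = y
    · simp only [hy, if_pos]
      refine Finset.prod_congr rfl fun j _ => ?_
      by_cases hj : j = i
      · subst hj; simp [hy]
      · simp [hj]
    · rw [if_neg hy]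
      symm
      refine Finset.prod_eq_zero (Finset.mem_univ i) ?_
      simp [hy]
  rw [Finset.sum_congr rfl fun h _ => key h,
    ← Fintype.prod_sum (fun j z => if j = i then (if z = y then c i y else 0) else c j z)]
  rw [← Finset.mul_prod_erase univ _ (Finset.mem_univ i)]
  congr 1
  · simp
  · refine Finset.prod_congr rfl fun j hj => ?_
    have : j ≠ i := (Finset.mem_erase.mp hj).1
    simp [this]


section marginals

variable {n : ℕ} {𝒳 𝒜 𝒴 : Type*}
  [Fintype 𝒳] [DecidableEq 𝒳] [Fintype 𝒜] [DecidableEq 𝒜] [Fintype 𝒴] [DecidableEq 𝒴]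
  (μ : 𝒳 → ℝ) (f : (Fin n → 𝒳) → (Fin n → 𝒜)) (W : 𝒳 → 𝒜 → 𝒴 → ℝ)

/-- P(X_i = x, A_i = a) -/
noncomputable def margXA (i : Fin n) (x : 𝒳) (a : 𝒜) : ℝ :=
  ∑ u : Fin n → 𝒳, if u i = x ∧ f u i = a then ∏ j, μ (u j) else 0

variable {W} in
lemma sumW (hW1 : ∀ x a, ∑ y, W x a y = 1) (u : Fin n → 𝒳) : ∑ v : Fin n → 𝒴, ∏ j, W (u j) (f u j) (v j) = 1 := by
  rw [← Fintype.prod_sum]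
  simp [hW1]

variable {W} in
lemma sumW_fix (hW1 : ∀ x a, ∑ y, W x a y = 1) (u : Fin n → 𝒳) (i : Fin n) (y : 𝒴) :
    ∑ v : Fin n → 𝒴, (if v i = y then ∏ j, W (u j) (f u j) (v j) else 0)
      = W (u i) (f u i) y := by
  rw [sum_pi_fix (fun j z => W (u j) (f u j) z) i y]
  rw [Finset.prod_congr rfl (fun j _ => hW1 (u j) (f u j))]
  simp

lemma probOf_X (hW1 : ∀ x a, ∑ y, W x a y = 1) (i : Fin n) (x : 𝒳) :
    probOf (jointPmf μ f W) (fun ω => ω.1 i) x = μ x * ∏ j ∈ univ.erase i, (∑ z, μ z) := by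
  rw [probOf, Fintype.sum_prod_type]
  have : ∀ u : Fin n → 𝒳,
      (∑ v : Fin n → 𝒴, if u i = x then jointPmf μ f W (u, v) else 0)
        = (if u i = x then ∏ j, μ (u j) else 0) := by
    intro u
    by_cases h : u i = x
    · simp only [h, if_pos, jointPmf, ← Finset.mul_sum, sumW f hW1 u, mul_one]
    · simp [h]
  rw [Finset.sum_congr rfl fun u _ => this u, sum_pi_fix (fun _ z => μ z) i x]

lemma probOf_XA (hW1 : ∀ x a, ∑ y, W x a y = 1) (i : Fin n) (x : 𝒳) (a : 𝒜) :
    probOf (jointPmf μ f W) (fun ω => (ω.1 i, f ω.1 i)) (x, a) = margXA μ f i x a := by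
  rw [probOf, Fintype.sum_prod_type, margXA]
  refine Finset.sum_congr rfl fun u _ => ?_
  simp only [Prod.mk.injEq]
  by_cases h : u i = x ∧ f u i = a
  · simp only [h.1, h.2, and_self, if_pos, if_true, jointPmf, ← Finset.mul_sum,
      sumW f hW1 u, mul_one]
  · rw [if_neg h, Finset.sum_eq_zero]
    intro v _
    rw [if_neg h]

lemma probOf_XYA (hW1 : ∀ x a, ∑ y, W x a y = 1) (i : Fin n) (x : 𝒳) (y : 𝒴) (a : 𝒜) :
    probOf (jointPmf μ f W) (fun ω => ((ω.1 i, ω.2 i), f ω.1 i)) ((x, y), a)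
      = margXA μ f i x a * W x a y := by
  rw [probOf, Fintype.sum_prod_type, margXA, Finset.sum_mul]
  refine Finset.sum_congr rfl fun u _ => ?_
  simp only [Prod.mk.injEq]
  by_cases h : u i = x ∧ f u i = a
  · have : ∀ v : Fin n → 𝒴,
        (if (u i = x ∧ v i = y) ∧ f u i = a then jointPmf μ f W (u, v) else 0)
          = (∏ j, μ (u j)) * (if v i = y then ∏ j, W (u j) (f u j) (v j) else 0) := by
      intro v
      by_cases hv : v i = y
      · simp [h.1, h.2, hv, jointPmf]
      · simp [hv]
    rw [Finset.sum_congr rfl fun v _ => this v, ← Finset.mul_sum,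
      sumW_fix f hW1 u i y, h.1, h.2]
    simp
  · rw [if_neg h, Finset.sum_eq_zero, zero_mul]
    intro v _
    rw [if_neg]
    tauto
end marginals


/-- Under the memoryless action-dependent source setup,
`H(X^n, Y^n) = ∑ i, [ I(X_i ; A_i) + H(X_i, Y_i | A_i) ]`. -/
theorem stmt_2 {n : ℕ} {𝒳 𝒜 𝒴 : Type*}
    [Fintype 𝒳] [DecidableEq 𝒳] [Fintype 𝒜] [DecidableEq 𝒜] [Fintype 𝒴] [DecidableEq 𝒴]
    (μ : 𝒳 → ℝ) (hμ0 : ∀ x, 0 ≤ μ x) (hμ1 : ∑ x, μ x = 1)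
    (f : (Fin n → 𝒳) → (Fin n → 𝒜))
    (W : 𝒳 → 𝒜 → 𝒴 → ℝ) (hW0 : ∀ x a y, 0 ≤ W x a y) (hW1 : ∀ x a, ∑ y, W x a y = 1) :
    ent (jointPmf μ f W) (fun ω => (ω.1, ω.2))
      = ∑ i : Fin n,
          (mutInfo (jointPmf μ f W) (fun ω => ω.1 i) (fun ω => f ω.1 i)
            + condEnt (jointPmf μ f W) (fun ω => (ω.1 i, ω.2 i)) (fun ω => f ω.1 i)) := by
  classical
  set p := jointPmf μ f W with hp
  have hprob_id : ∀ s : (Fin n → 𝒳) × (Fin n → 𝒴),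
      probOf p (fun ω => (ω.1, ω.2)) s = p s := by
    intro s
    simp [probOf, Finset.sum_ite_eq']
  have hX : ∀ (i : Fin n) (x : 𝒳), probOf p (fun ω => ω.1 i) x = μ x := by
    intro i x
    rw [hp, probOf_X μ f W hW1 i x]
    simp [hμ1]
  -- pointwise identity
  have main : ∀ ω : (Fin n → 𝒳) × (Fin n → 𝒴),
      p ω * (-Real.log (p ω))
        = ∑ i : Fin n,
            (p ω * (-Real.log (μ (ω.1 i)))
              + p ω * (-Real.log (margXA μ f i (ω.1 i) (f ω.1 i)
                  * W (ω.1 i) (f ω.1 i) (ω.2 i)))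
              - p ω * (-Real.log (margXA μ f i (ω.1 i) (f ω.1 i)))) := by
    intro ω
    by_cases h : p ω = 0
    · simp [h]
    · have hprod : p ω = (∏ j, μ (ω.1 j)) * ∏ j, W (ω.1 j) (f ω.1 j) (ω.2 j) := rfl
      rw [hprod] at h
      have h1 : (∏ j, μ (ω.1 j)) ≠ 0 := (mul_ne_zero_iff.mp h).1
      have h2 : (∏ j, W (ω.1 j) (f ω.1 j) (ω.2 j)) ≠ 0 := (mul_ne_zero_iff.mp h).2
      have hμpos : ∀ j, μ (ω.1 j) ≠ 0 := by
        intro j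
        exact Finset.prod_ne_zero_iff.mp h1 j (Finset.mem_univ j)
      have hWpos : ∀ j, W (ω.1 j) (f ω.1 j) (ω.2 j) ≠ 0 := by
        intro j
        exact Finset.prod_ne_zero_iff.mp h2 j (Finset.mem_univ j)
      have hm : ∀ i : Fin n, 0 < margXA μ f i (ω.1 i) (f ω.1 i) := by
        intro i
        have hterm : ∀ u : Fin n → 𝒳, u ∈ (univ : Finset (Fin n → 𝒳)) →
            0 ≤ (if u i = ω.1 i ∧ f u i = f ω.1 i then ∏ j, μ (u j) else 0) := by
          intro u _
          split
          · exact Finset.prod_nonneg fun j _ => hμ0 _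
          · exact le_rfl
        have hle := Finset.single_le_sum hterm (Finset.mem_univ ω.1)
        have hpos : 0 < (∏ j, μ (ω.1 j)) :=
          lt_of_le_of_ne (Finset.prod_nonneg fun j _ => hμ0 _) (Ne.symm h1)
        rw [margXA]
        calc (0:ℝ) < ∏ j, μ (ω.1 j) := hpos
          _ = (if ω.1 i = ω.1 i ∧ f ω.1 i = f ω.1 i then ∏ j, μ (ω.1 j) else 0) := by simp
          _ ≤ _ := hle
      have key2 : ∀ i : Fin n,
          (-Real.log (μ (ω.1 i)))
            + (-Real.log (margXA μ f i (ω.1 i) (f ω.1 i) * W (ω.1 i) (f ω.1 i) (ω.2 i)))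
            - (-Real.log (margXA μ f i (ω.1 i) (f ω.1 i)))
          = -Real.log (μ (ω.1 i)) - Real.log (W (ω.1 i) (f ω.1 i) (ω.2 i)) := by
        intro i
        rw [Real.log_mul (hm i).ne' (hWpos i)]
        ring
      symm
      calc ∑ i : Fin n,
            (p ω * (-Real.log (μ (ω.1 i)))
              + p ω * (-Real.log (margXA μ f i (ω.1 i) (f ω.1 i)
                  * W (ω.1 i) (f ω.1 i) (ω.2 i)))
              - p ω * (-Real.log (margXA μ f i (ω.1 i) (f ω.1 i))))
          = ∑ i : Fin n, p ω * (-Real.log (μ (ω.1 i))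
              - Real.log (W (ω.1 i) (f ω.1 i) (ω.2 i))) := by
            refine Finset.sum_congr rfl fun i _ => ?_
            rw [← key2 i]; ring
        _ = p ω * ∑ i : Fin n, (-Real.log (μ (ω.1 i))
              - Real.log (W (ω.1 i) (f ω.1 i) (ω.2 i))) := by rw [Finset.mul_sum]
        _ = p ω * (-Real.log (p ω)) := by
            congr 1
            rw [Finset.sum_sub_distrib, hprod, Real.log_mul h1 h2,
              Real.log_prod fun j _ => hμpos j,
              Real.log_prod fun j _ => hWpos j]
            rw [Finset.sum_neg_distrib]
            ring
  -- the entL-level identity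
  have key : (∑ ω, p ω * (-Real.log (p ω)))
      = ∑ i : Fin n,
          ((∑ ω, p ω * (-Real.log (probOf p (fun ω => ω.1 i) (ω.1 i))))
            + (∑ ω, p ω * (-Real.log (probOf p
                (fun ω => ((ω.1 i, ω.2 i), f ω.1 i)) ((ω.1 i, ω.2 i), f ω.1 i))))
            - (∑ ω, p ω * (-Real.log (probOf p
                (fun ω => (ω.1 i, f ω.1 i)) (ω.1 i, f ω.1 i))))) := by
    have : ∀ i : Fin n, ∀ ω : (Fin n → 𝒳) × (Fin n → 𝒴),
        probOf p (fun ω => ((ω.1 i, ω.2 i), f ω.1 i)) ((ω.1 i, ω.2 i), f ω.1 i)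
          = margXA μ f i (ω.1 i) (f ω.1 i) * W (ω.1 i) (f ω.1 i) (ω.2 i) := by
      intro i ω
      rw [hp, probOf_XYA μ f W hW1]
    have hXA : ∀ i : Fin n, ∀ ω : (Fin n → 𝒳) × (Fin n → 𝒴),
        probOf p (fun ω => (ω.1 i, f ω.1 i)) (ω.1 i, f ω.1 i)
          = margXA μ f i (ω.1 i) (f ω.1 i) := by
      intro i ω
      rw [hp, probOf_XA μ f W hW1]
    calc (∑ ω, p ω * (-Real.log (p ω)))
        = ∑ ω : (Fin n → 𝒳) × (Fin n → 𝒴), ∑ i : Fin n,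
            (p ω * (-Real.log (μ (ω.1 i)))
              + p ω * (-Real.log (margXA μ f i (ω.1 i) (f ω.1 i)
                  * W (ω.1 i) (f ω.1 i) (ω.2 i)))
              - p ω * (-Real.log (margXA μ f i (ω.1 i) (f ω.1 i)))) :=
          Finset.sum_congr rfl fun ω _ => main ω
      _ = ∑ i : Fin n, ∑ ω : (Fin n → 𝒳) × (Fin n → 𝒴),
            (p ω * (-Real.log (μ (ω.1 i)))
              + p ω * (-Real.log (margXA μ f i (ω.1 i) (f ω.1 i)
                  * W (ω.1 i) (f ω.1 i) (ω.2 i)))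
              - p ω * (-Real.log (margXA μ f i (ω.1 i) (f ω.1 i)))) := Finset.sum_comm
      _ = _ := by
          refine Finset.sum_congr rfl fun i _ => ?_
          rw [Finset.sum_sub_distrib, Finset.sum_add_distrib]
          congr 1
          · congr 1
            · refine Finset.sum_congr rfl fun ω _ => ?_
              rw [hX i (ω.1 i)]
            · refine Finset.sum_congr rfl fun ω _ => ?_
              rw [this i ω]
          · refine Finset.sum_congr rfl fun ω _ => ?_
            rw [hXA i ω]
  -- assemble
  simp only [mutInfo, condEnt, ent_eq]
  have hid : ∀ ω : (Fin n → 𝒳) × (Fin n → 𝒴),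
      probOf p (fun ω => (ω.1, ω.2)) (ω.1, ω.2) = p ω := by
    intro ω; rw [hprob_id (ω.1, ω.2)]
  have e1 : (∑ ω, p ω * -Real.log (probOf p (fun ω => (ω.1, ω.2)) (ω.1, ω.2)))
      = ∑ ω, p ω * -Real.log (p ω) :=
    Finset.sum_congr rfl fun ω _ => by rw [hid ω]
  rw [e1, key, Finset.sum_div]
  refine Finset.sum_congr rfl fun i _ => ?_
  ring
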